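/- arXiv:math/0402438 — 2 statements merged into one kernel-verified Lean document; each statement's English description precedes it below -/
import Mathlib

section
/- Let m, c, k ∈ ℂ^{n×n} be such that det(X c + k) ∈ ℂ[X] has degree n and all of its n roots λ_1, …, λ_n (counted with multiplicity) are nonzero, and det(X m + c) ∈ ℂ[X] has degree n and all of its n roots μ_1, …, μ_n (counted with multiplicity) are nonzero. Consider the pencil 𝒜_ε = ε X² m + X c + k. Then there exists ε₀ > 0 and functions L_1, …, L_n, L'_1, …, L'_n : (0, ε₀) → ℂ such that for every ε ∈ (0, ε₀) the polynomial det(𝒜_ε) ∈ ℂ[X] has degree 2n and its multiset of roots, counted with multiplicity, is exactly {L_1(ε), …, L_n(ε), L'_1(ε), …, L'_n(ε)}, with L_i(ε) → λ_i and ε L'_i(ε) → μ_i as ε → 0⁺ for each i = 1, …, n. In other words, 𝒜_ε has n eigenvalues asymptotically equivalent to λ_i ε⁰ and n eigenvalues asymptotically equivalent to μ_i ε^{−1}. -/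
open Polynomial Filter Topology Finset

noncomputable section

/-- The affine pencil `X c + k`, as a matrix of polynomials in `ℂ[X]`. -/
def affPencil {n : ℕ} (c k : Matrix (Fin n) (Fin n) ℂ) :
    Matrix (Fin n) (Fin n) (Polynomial ℂ) :=
  fun i j => Polynomial.C (c i j) * X + Polynomial.C (k i j)

/-- The perturbed quadratic pencil `𝒜_ε = ε X² m + X c + k`, as a matrix of
polynomials in `ℂ[X]`, for a parameter `ε > 0`. -/
def quadPencil {n : ℕ} (m c k : Matrix (Fin n) (Fin n) ℂ) (ε : ℝ) :
    Matrix (Fin n) (Fin n) (Polynomial ℂ) :=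
  fun i j => Polynomial.C ((ε : ℂ) * m i j) * X ^ 2 +
    Polynomial.C (c i j) * X + Polynomial.C (k i j)


lemma norm_multiset_prod (s : Multiset ℂ) : ‖s.prod‖ = (s.map (fun z => ‖z‖)).prod := by
  induction s using Multiset.induction with
  | empty => simp
  | cons a s ih => simp [norm_mul, ih]

lemma pow_card_le_prod_norm (s : Multiset ℂ) (x : ℂ) (a : ℝ) (ha : 0 ≤ a)
    (h : ∀ w ∈ s, a ≤ ‖x - w‖) :
    a ^ (Multiset.card s) ≤ (s.map (fun w => ‖x - w‖)).prod := by
  induction s using Multiset.induction with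
  | empty => simp
  | cons b s ih =>
    simp only [Multiset.card_cons, Multiset.map_cons, Multiset.prod_cons, pow_succ]
    have h1 : a ^ (Multiset.card s) ≤ (s.map (fun w => ‖x - w‖)).prod :=
      ih (fun w hw => h w (Multiset.mem_cons_of_mem hw))
    have h2 : a ≤ ‖x - b‖ := h b (Multiset.mem_cons_self _ _)
    rw [mul_comm]
    exact mul_le_mul h2 h1 (pow_nonneg ha _) (norm_nonneg _)

lemma map_univ_fin_succ {d : ℕ} {β : Type*} (g : Fin (d+1) → β) :
    Multiset.map g (univ : Finset (Fin (d+1))).val =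
      g 0 ::ₘ Multiset.map (fun i => g i.succ) (univ : Finset (Fin d)).val := by
  rw [Fin.univ_succ, Finset.cons_val, Multiset.map_cons, Finset.map_val, Multiset.map_map]
  rfl

lemma map_univ_fin_add {a b : ℕ} {β : Type*} (h : Fin (a+b) → β) :
    Multiset.map h (univ : Finset (Fin (a+b))).val =
      Multiset.map (fun i : Fin a => h (finSumFinEquiv (Sum.inl i))) univ.val +
      Multiset.map (fun i : Fin b => h (finSumFinEquiv (Sum.inr i))) univ.val := by
  have h1 : (univ : Finset (Fin (a+b))) =
      (univ : Finset (Fin a ⊕ Fin b)).map finSumFinEquiv.toEmbedding :=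
    (Finset.map_univ_equiv _).symm
  rw [h1, ← Finset.univ_disjSum_univ, Finset.map_val, Finset.val_disjSum]
  have hd : ((Finset.univ : Finset (Fin a)).val.disjSum (Finset.univ : Finset (Fin b)).val) =
      Multiset.map Sum.inl (Finset.univ : Finset (Fin a)).val +
      Multiset.map Sum.inr (Finset.univ : Finset (Fin b)).val := rfl
  rw [hd, Multiset.map_add, Multiset.map_add, Multiset.map_map, Multiset.map_map,
    Multiset.map_map, Multiset.map_map]
  rfl

/-- A root of `f` closest to `x` (or `x` itself if `f` has no roots). -/
noncomputable def closestRoot (f : ℂ[X]) (x : ℂ) : ℂ :=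
  if h : f.roots.toFinset.Nonempty then
    (f.roots.toFinset.exists_min_image (fun w => ‖w - x‖) h).choose
  else x

lemma roots_toFinset_nonempty {f : ℂ[X]} (h : f.roots ≠ 0) : f.roots.toFinset.Nonempty := by
  rcases Multiset.exists_mem_of_ne_zero h with ⟨a, ha⟩
  exact ⟨a, Multiset.mem_toFinset.2 ha⟩

lemma closestRoot_mem {f : ℂ[X]} {x : ℂ} (h : f.roots ≠ 0) : closestRoot f x ∈ f.roots := by
  have hne := roots_toFinset_nonempty h
  rw [closestRoot, dif_pos hne]
  have := (f.roots.toFinset.exists_min_image (fun w => ‖w - x‖) hne).choose_spec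
  exact Multiset.mem_toFinset.1 this.1

lemma closestRoot_min {f : ℂ[X]} {x : ℂ} (h : f.roots ≠ 0) {w : ℂ} (hw : w ∈ f.roots) :
    ‖closestRoot f x - x‖ ≤ ‖w - x‖ := by
  have hne := roots_toFinset_nonempty h
  rw [closestRoot, dif_pos hne]
  exact (f.roots.toFinset.exists_min_image (fun w => ‖w - x‖) hne).choose_spec.2 w
    (Multiset.mem_toFinset.2 hw)

/-- Continuity of the root multiset of a family of complex polynomials of fixed degree. -/
lemma roots_continuity :
    ∀ (d : ℕ) (p : ℂ[X]) (lam : Fin d → ℂ) (F : ℝ → ℂ[X]) (l : Filter ℝ),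
    p.natDegree = d →
    p.roots = Multiset.map lam Finset.univ.val →
    (∀ j, Tendsto (fun t => (F t).coeff j) l (𝓝 (p.coeff j))) →
    (∀ᶠ t in l, (F t).natDegree = d) →
    ∃ r : Fin d → ℝ → ℂ,
      (∀ᶠ t in l, (F t).roots = Multiset.map (fun i => r i t) Finset.univ.val) ∧
      ∀ i, Tendsto (r i) l (𝓝 (lam i)) := by
  intro d
  induction d with
  | zero =>
    intro p lam F l hd hroots hcoeff hdeg
    refine ⟨fun i _ => 0, ?_, fun i => i.elim0⟩
    filter_upwards [hdeg] with t ht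
    have h0 : (F t).roots = 0 := by
      by_cases h : F t = 0
      · simp [h]
      · exact Multiset.card_eq_zero.1 (Nat.le_zero.1 ((Polynomial.card_roots' _).trans ht.le))
    simp [h0]
  | succ d ih =>
    intro p lam F l hd hroots hcoeff hdeg
    have hp0 : p ≠ 0 := fun h => by simp [h] at hd
    set lambda := lam 0 with hlambda
    have hmem : lambda ∈ p.roots := by
      rw [hroots]
      exact Multiset.mem_map.2 ⟨0, by simp, rfl⟩
    have hlead : p.coeff (d+1) ≠ 0 := by
      have : p.coeff (d+1) = p.leadingCoeff := by rw [Polynomial.leadingCoeff, hd]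
      rw [this]
      exact leadingCoeff_ne_zero.2 hp0
    set z : ℝ → ℂ := fun t => closestRoot (F t) lambda with hz_def
    have hF0 : ∀ᶠ t in l, F t ≠ 0 ∧ Multiset.card (F t).roots = d + 1 := by
      filter_upwards [hdeg] with t ht
      have hne : F t ≠ 0 := fun h => by simp [h] at ht
      refine ⟨hne, ?_⟩
      have := (IsAlgClosed.splits (F t)).natDegree_eq_card_roots
      omega
    have hrne : ∀ᶠ t in l, (F t).roots ≠ 0 := by
      filter_upwards [hF0] with t ht h0
      rw [h0] at ht; simp at ht
    have hzmem : ∀ᶠ t in l, z t ∈ (F t).roots := by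
      filter_upwards [hrne] with t ht
      exact closestRoot_mem ht
    -- z tends to lambda
    have hz : Tendsto z l (𝓝 lambda) := by
      rw [Metric.tendsto_nhds]
      intro δ hδ
      set b := ‖p.coeff (d+1)‖ / 2 with hb_def
      have hb : 0 < b := by
        have : 0 < ‖p.coeff (d+1)‖ := norm_pos_iff.2 hlead
        positivity
      have h1 : ∀ᶠ t in l, b < ‖(F t).coeff (d+1)‖ :=
        (hcoeff (d+1)).norm.eventually_const_lt (by
          rw [hb_def]
          exact half_lt_self (norm_pos_iff.2 hlead))
      have hpeval : ∑ j ∈ Finset.range (d+2), p.coeff j * lambda ^ j = 0 := by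
        rw [← Polynomial.eval_eq_sum_range' (by omega : p.natDegree < d + 2)]
        exact Polynomial.isRoot_of_mem_roots hmem
      have heval : Tendsto (fun t => (F t).eval lambda) l (𝓝 0) := by
        have hsum : Tendsto
            (fun t => ∑ j ∈ Finset.range (d+2), (F t).coeff j * lambda ^ j) l
            (𝓝 (∑ j ∈ Finset.range (d+2), p.coeff j * lambda ^ j)) :=
          tendsto_finset_sum _ (fun j _ => (hcoeff j).mul tendsto_const_nhds)
        rw [hpeval] at hsum
        refine Tendsto.congr' ?_ hsum
        filter_upwards [hdeg] with t ht
        rw [← Polynomial.eval_eq_sum_range' (by omega : (F t).natDegree < d + 2)]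
      have h2 : ∀ᶠ t in l, ‖(F t).eval lambda‖ < b * δ ^ (d+1) := by
        have hnorm : Tendsto (fun t => ‖(F t).eval lambda‖) l (𝓝 0) := by
          simpa using heval.norm
        exact hnorm.eventually_lt_const (by positivity)
      filter_upwards [hdeg, hF0, hrne, h1, h2] with t ht hF0t hrt h1t h2t
      -- pointwise estimate
      set m := ‖z t - lambda‖ with hm_def
      have hm0 : 0 ≤ m := norm_nonneg _
      have hfac : F t = C (F t).leadingCoeff * ((F t).roots.map (fun w => X - C w)).prod :=
        (IsAlgClosed.splits _).eq_prod_roots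
      have hevalfac : ‖(F t).eval lambda‖ =
          ‖(F t).leadingCoeff‖ * (((F t).roots).map (fun w => ‖lambda - w‖)).prod := by
        conv_lhs => rw [hfac]
        rw [Polynomial.eval_mul, Polynomial.eval_C, norm_mul, Polynomial.eval_multiset_prod,
          Multiset.map_map, norm_multiset_prod, Multiset.map_map]
        congr 2
        ext w
        simp
      have hmin : ∀ w ∈ (F t).roots, m ≤ ‖lambda - w‖ := by
        intro w hw
        rw [norm_sub_rev]
        exact closestRoot_min hrt hw
      have hprod : m ^ (d+1) ≤ (((F t).roots).map (fun w => ‖lambda - w‖)).prod := by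
        have := pow_card_le_prod_norm ((F t).roots) lambda m hm0 hmin
        rwa [hF0t.2] at this
      have hleadnorm : (F t).leadingCoeff = (F t).coeff (d+1) := by
        rw [Polynomial.leadingCoeff, ht]
      have hchain : b * m ^ (d+1) < b * δ ^ (d+1) := by
        calc b * m ^ (d+1) ≤ ‖(F t).coeff (d+1)‖ * m ^ (d+1) :=
              mul_le_mul_of_nonneg_right h1t.le (by positivity)
          _ ≤ ‖(F t).coeff (d+1)‖ * (((F t).roots).map (fun w => ‖lambda - w‖)).prod :=
              mul_le_mul_of_nonneg_left hprod (norm_nonneg _)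
          _ = ‖(F t).eval lambda‖ := by rw [hevalfac, hleadnorm]
          _ < b * δ ^ (d+1) := h2t
      have : m ^ (d+1) < δ ^ (d+1) := (mul_lt_mul_iff_right₀ hb).1 hchain
      have hmlt : m < δ := lt_of_pow_lt_pow_left₀ (d+1) hδ.le this
      rw [Complex.dist_eq]
      exact hmlt
    -- factor out the root z
    set G : ℝ → ℂ[X] := fun t => F t /ₘ (X - C (z t)) with hG_def
    set q : ℂ[X] := p /ₘ (X - C lambda) with hq_def
    have hqfac : (X - C lambda) * q = p :=
      mul_divByMonic_eq_iff_isRoot.2 (Polynomial.isRoot_of_mem_roots hmem)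
    have hqd : q.natDegree = d := by
      rw [hq_def, Polynomial.natDegree_divByMonic _ (monic_X_sub_C _), hd,
        Polynomial.natDegree_X_sub_C]
      omega
    have hqroots : q.roots = Multiset.map (fun i : Fin d => lam i.succ) Finset.univ.val := by
      have h1 : p.roots = lambda ::ₘ q.roots := by
        rw [← hqfac, Polynomial.roots_mul (by rw [hqfac]; exact hp0), roots_X_sub_C,
          Multiset.singleton_add]
      have h2 : Multiset.map lam Finset.univ.val =
          lambda ::ₘ Multiset.map (fun i : Fin d => lam i.succ) Finset.univ.val :=
        map_univ_fin_succ lam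
      rw [hroots, h2] at h1
      exact ((Multiset.cons_inj_right _).1 h1).symm
    have hGcoeff : ∀ j, Tendsto (fun t => (G t).coeff j) l (𝓝 (q.coeff j)) := by
      intro j
      have htarget : q.coeff j =
          ∑ i ∈ Finset.Icc (j+1) (d+1), lambda ^ (i - (j+1)) * p.coeff i := by
        rw [hq_def, Polynomial.coeff_divByMonic_X_sub_C, hd]
      rw [htarget]
      have hsum : Tendsto
          (fun t => ∑ i ∈ Finset.Icc (j+1) (d+1), (z t) ^ (i - (j+1)) * (F t).coeff i) l
          (𝓝 (∑ i ∈ Finset.Icc (j+1) (d+1), lambda ^ (i - (j+1)) * p.coeff i)) :=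
        tendsto_finset_sum _ (fun i _ => (hz.pow _).mul (hcoeff i))
      refine Tendsto.congr' ?_ hsum
      filter_upwards [hdeg] with t ht
      rw [hG_def, Polynomial.coeff_divByMonic_X_sub_C, ht]
    have hGdeg : ∀ᶠ t in l, (G t).natDegree = d := by
      filter_upwards [hdeg] with t ht
      rw [hG_def, Polynomial.natDegree_divByMonic _ (monic_X_sub_C _), ht,
        Polynomial.natDegree_X_sub_C]
      omega
    obtain ⟨r', hr'ev, hr'lim⟩ := ih q (fun i : Fin d => lam i.succ) G l hqd hqroots hGcoeff hGdeg
    refine ⟨fun i => Fin.cases z r' i, ?_, ?_⟩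
    · filter_upwards [hzmem, hr'ev, hF0] with t hzt hr't hF0t
      have hFt : (X - C (z t)) * G t = F t :=
        mul_divByMonic_eq_iff_isRoot.2 (Polynomial.isRoot_of_mem_roots hzt)
      have hsplit : (F t).roots = z t ::ₘ (G t).roots := by
        rw [← hFt, Polynomial.roots_mul (by rw [hFt]; exact hF0t.1), roots_X_sub_C,
          Multiset.singleton_add]
      rw [hsplit, hr't,
        map_univ_fin_succ (fun i : Fin (d+1) => Fin.cases (motive := fun _ => ℝ → ℂ) z r' i t)]
      simp
    · intro i
      refine Fin.cases ?_ ?_ i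
      · simpa using hz
      · intro i
        simpa using hr'lim i

lemma natDegree_det_le {n : ℕ} (M : Matrix (Fin n) (Fin n) ℂ[X]) (d : ℕ)
    (h : ∀ i j, (M i j).natDegree ≤ d) : M.det.natDegree ≤ n * d := by
  rw [Matrix.det_apply']
  refine Polynomial.natDegree_sum_le_of_forall_le _ _ (fun σ _ => ?_)
  refine (Polynomial.natDegree_mul_le).trans ?_
  rw [Polynomial.natDegree_intCast, zero_add]
  refine (Polynomial.natDegree_prod_le _ _).trans ?_
  calc ∑ i, (M (σ i) i).natDegree ≤ ∑ _i : Fin n, d := Finset.sum_le_sum (fun i _ => h _ _)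
    _ = n * d := by simp [Finset.sum_const, Finset.card_univ, mul_comm]

lemma coeff_det {n : ℕ} (M : Matrix (Fin n) (Fin n) ℂ[X]) (d : ℕ)
    (h : ∀ i j, (M i j).natDegree ≤ d) :
    M.det.coeff (n * d) = Matrix.det (fun i j => (M i j).coeff d) := by
  rw [Matrix.det_apply', Polynomial.finset_sum_coeff, Matrix.det_apply' (fun i j => (M i j).coeff d)]
  refine Finset.sum_congr rfl (fun σ _ => ?_)
  rw [← map_intCast (Polynomial.C : ℂ →+* ℂ[X]), Polynomial.coeff_C_mul]
  congr 1
  have := Polynomial.coeff_prod_of_natDegree_le (s := univ) (f := fun i => M (σ i) i)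
    (n := d) (fun i _ => h _ _)
  rwa [Finset.card_univ, Fintype.card_fin] at this


lemma continuous_coeff_eval (D : Polynomial (Polynomial ℂ)) (j : ℕ) :
    Continuous fun e : ℂ => (D.eval (Polynomial.C e)).coeff j := by
  induction D using Polynomial.induction_on' with
  | add p q hp hq => simpa [Polynomial.eval_add, Polynomial.coeff_add, Pi.add_def] using hp.add hq
  | monomial i a =>
    have heq : (fun e : ℂ => ((Polynomial.monomial i a).eval (Polynomial.C e)).coeff j)
        = fun e => a.coeff j * e ^ i := by
      funext e
      rw [Polynomial.eval_monomial, ← Polynomial.C_pow, Polynomial.coeff_mul_C]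
    rw [heq]
    exact continuous_const.mul (continuous_pow i)

lemma tendsto_coeff_eval (D : Polynomial (Polynomial ℂ)) (j : ℕ) :
    Tendsto (fun ε : ℝ => (D.eval (Polynomial.C ((ε:ℂ)))).coeff j) (𝓝[>] (0:ℝ))
      (𝓝 ((D.eval 0).coeff j)) := by
  have h1 := (continuous_coeff_eval D j).tendsto 0
  have h2 : Tendsto (fun ε : ℝ => (ε : ℂ)) (𝓝[>] (0:ℝ)) (𝓝 (0:ℂ)) := by
    have := Complex.continuous_ofReal.tendsto 0
    rw [Complex.ofReal_zero] at this
    exact this.mono_left nhdsWithin_le_nhds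
  have := h1.comp h2
  simpa [Function.comp_def, Polynomial.C_0] using this

lemma roots_comp_C_mul_X (f : ℂ[X]) {a : ℂ} (ha : a ≠ 0) :
    (f.comp (C a * X)).roots = f.roots.map (fun z => a⁻¹ * z) := by
  by_cases hf : f = 0
  · simp [hf]
  have hsplit := IsAlgClosed.splits f
  have hfac := hsplit.eq_prod_roots
  conv_lhs => rw [hfac]
  rw [Polynomial.mul_comp, Polynomial.C_comp, Polynomial.multiset_prod_comp, Multiset.map_map]
  have hmap : Multiset.map ((fun p : ℂ[X] => p.comp (C a * X)) ∘ (fun z => X - C z)) f.roots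
      = Multiset.map (fun z => C a * (X - C (a⁻¹ * z))) f.roots := by
    refine Multiset.map_congr rfl (fun z _ => ?_)
    simp only [Function.comp_apply, Polynomial.sub_comp, Polynomial.X_comp, Polynomial.C_comp]
    rw [mul_sub, ← Polynomial.C_mul, mul_inv_cancel_left₀ ha]
  rw [hmap, Multiset.prod_map_mul, Multiset.map_const', Multiset.prod_replicate, ← Polynomial.C_pow,
    ← mul_assoc, ← Polynomial.C_mul]
  rw [Polynomial.roots_C_mul _ (mul_ne_zero (Polynomial.leadingCoeff_ne_zero.2 hf)
    (pow_ne_zero _ ha))]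
  have : Multiset.map (fun z => X - C (a⁻¹ * z)) f.roots
      = Multiset.map (fun w => X - C w) (f.roots.map (fun z => a⁻¹ * z)) := by
    rw [Multiset.map_map]; rfl
  rw [this, Polynomial.roots_multiset_prod_X_sub_C]

lemma reflect_one_X_sub_C (z : ℂ) : Polynomial.reflect 1 (X - C z) = 1 - C z * X := by
  ext j
  rw [Polynomial.coeff_reflect]
  match j with
  | 0 => simp [Polynomial.revAt_le]
  | 1 => simp [Polynomial.revAt_le, Polynomial.coeff_one]
  | (j+2) =>
    rw [Polynomial.revAt_eq_self_of_lt (by omega)]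
    simp [Polynomial.coeff_X, Polynomial.coeff_C, Polynomial.coeff_one]

lemma reflect_multiset_prod_linear (s : Multiset ℂ) :
    Polynomial.reflect (Multiset.card s) ((s.map (fun z => X - C z)).prod)
      = (s.map (fun z => 1 - C z * X)).prod := by
  induction s using Multiset.induction with
  | empty => simp
  | cons a s ih =>
    rw [Multiset.card_cons, Multiset.map_cons, Multiset.prod_cons, Multiset.map_cons,
      Multiset.prod_cons, ← ih, ← reflect_one_X_sub_C a]
    have h1 : (X - C a).natDegree ≤ 1 := le_of_eq (Polynomial.natDegree_X_sub_C a)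
    have h2 : ((s.map (fun z => X - C z)).prod).natDegree ≤ Multiset.card s := by
      refine (Polynomial.natDegree_multiset_prod_le _).trans ?_
      rw [Multiset.map_map]
      have heq : Multiset.map (Polynomial.natDegree ∘ fun z => X - C z) s
          = Multiset.map (fun _ => 1) s :=
        Multiset.map_congr rfl (by intro z _; simp [Polynomial.natDegree_X_sub_C])
      rw [heq, Multiset.map_const', Multiset.sum_replicate, smul_eq_mul, mul_one]
    have := Polynomial.reflect_mul (X - C a) ((s.map (fun z => X - C z)).prod) h1 h2
    rw [show Multiset.card s + 1 = 1 + Multiset.card s by omega, this]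

lemma roots_reflect (f : ℂ[X]) (hf : f ≠ 0) (h0 : ∀ z ∈ f.roots, z ≠ 0) :
    (Polynomial.reflect f.natDegree f).roots = f.roots.map (fun z => z⁻¹) := by
  have hsplit := IsAlgClosed.splits f
  have hfac := hsplit.eq_prod_roots
  have hcard : Multiset.card f.roots = f.natDegree := by
    have := hsplit.natDegree_eq_card_roots
    omega
  have hkey : Polynomial.reflect f.natDegree f = Polynomial.reflect (0 + Multiset.card f.roots)
      (C f.leadingCoeff * (Multiset.map (fun a => X - C a) f.roots).prod) := by
    rw [← hfac, hcard, Nat.zero_add]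
  rw [hkey,
    Polynomial.reflect_mul _ _ (le_of_eq (Polynomial.natDegree_C _)) (by
      refine (Polynomial.natDegree_multiset_prod_le _).trans ?_
      rw [Multiset.map_map]
      have heq : Multiset.map (Polynomial.natDegree ∘ fun z => X - C z) f.roots
          = Multiset.map (fun _ => 1) f.roots :=
        Multiset.map_congr rfl (by intro z _; simp [Polynomial.natDegree_X_sub_C])
      rw [heq, Multiset.map_const', Multiset.sum_replicate, smul_eq_mul, mul_one])]
  rw [reflect_multiset_prod_linear]
  have hmap : Multiset.map (fun z => 1 - C z * X) f.roots
      = Multiset.map (fun z => (-C z) * (X - C z⁻¹)) f.roots := by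
    refine Multiset.map_congr rfl (fun z hz => ?_)
    rw [neg_mul, mul_sub, ← Polynomial.C_mul, mul_inv_cancel₀ (h0 z hz), Polynomial.C_1]
    ring
  rw [hmap, Multiset.prod_map_mul]
  have hC : (Multiset.map (fun z => -C z) f.roots).prod
      = C ((Multiset.map (fun z => -z) f.roots).prod) := by
    rw [map_multiset_prod (Polynomial.C : ℂ →+* ℂ[X]), Multiset.map_map]
    exact congrArg Multiset.prod (Multiset.map_congr rfl (fun z _ => by simp))
  have hCne : ((Multiset.map (fun z => -z) f.roots).prod) ≠ 0 := by
    refine Multiset.prod_ne_zero ?_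
    simp only [Multiset.mem_map]
    rintro ⟨z, hz, hzz⟩
    exact h0 z hz (by simpa using hzz.symm)
  rw [hC, show Polynomial.reflect 0 (C f.leadingCoeff) = C f.leadingCoeff by
      simp [Polynomial.reflect_C],
    ← mul_assoc, ← Polynomial.C_mul,
    Polynomial.roots_C_mul _ (mul_ne_zero (Polynomial.leadingCoeff_ne_zero.2 hf) hCne)]
  have : Multiset.map (fun z => X - C z⁻¹) f.roots
      = Multiset.map (fun w => X - C w) (f.roots.map (fun z => z⁻¹)) := by
    rw [Multiset.map_map]; rfl
  rw [this, Polynomial.roots_multiset_prod_X_sub_C]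

set_option maxHeartbeats 1000000 in
/-- **Generic Najman-type splitting for `𝒜_ε = ε X² m + X c + k`.**
Suppose `det (X c + k)` has degree `n` and nonzero roots `λ_1, …, λ_n` (with
multiplicity), and `det (X m + c)` has degree `n` and nonzero roots `μ_1, …, μ_n`
(with multiplicity).  Then, for all small `ε > 0`, `det 𝒜_ε` has degree `2n`, and its
multiset of roots is exactly `{L_1 ε, …, L_n ε, L'_1 ε, …, L'_n ε}` where
`L_i ε → λ_i` and `ε L'_i ε → μ_i` as `ε → 0⁺`: the pencil `𝒜_ε` has `n` eigenvalues
asymptotically equivalent to `λ_i ε⁰` and `n` eigenvalues asymptotically equivalent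
to `μ_i ε^{-1}`. -/
theorem najman_generic_splitting
    (n : ℕ) (hn : 1 ≤ n) (m c k : Matrix (Fin n) (Fin n) ℂ)
    (lam : Fin n → ℂ) (mu : Fin n → ℂ)
    (hckdeg : (affPencil c k).det.natDegree = n)
    (hck : (affPencil c k).det.roots = Multiset.map lam Finset.univ.val)
    (hlam : ∀ i, lam i ≠ 0)
    (hmcdeg : (affPencil m c).det.natDegree = n)
    (hmc : (affPencil m c).det.roots = Multiset.map mu Finset.univ.val)
    (hmu : ∀ i, mu i ≠ 0) :
    ∃ ε₀ > (0 : ℝ), ∃ L L' : Fin n → ℝ → ℂ,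
      (∀ ε ∈ Set.Ioo (0 : ℝ) ε₀,
        (quadPencil m c k ε).det.natDegree = 2 * n ∧
        (quadPencil m c k ε).det.roots =
          Multiset.map (fun i => L i ε) Finset.univ.val +
          Multiset.map (fun i => L' i ε) Finset.univ.val) ∧
      (∀ i, Tendsto (fun ε : ℝ => L i ε) (𝓝[>] (0 : ℝ)) (𝓝 (lam i))) ∧
      (∀ i, Tendsto (fun ε : ℝ => (ε : ℂ) * L' i ε) (𝓝[>] (0 : ℝ)) (𝓝 (mu i))) := by
  classical
  set l := (𝓝[>] (0:ℝ)) with hl_def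
  set p : ℂ[X] := (affPencil c k).det with hp_def
  set pmc : ℂ[X] := (affPencil m c).det with hpmc_def
  set P : ℝ → ℂ[X] := fun ε => (quadPencil m c k ε).det with hP_def
  set Qmat : ℝ → Matrix (Fin n) (Fin n) ℂ[X] :=
    fun ε => fun i j => C (m i j) * X^2 + C (c i j) * X + C ((ε:ℂ) * k i j) with hQmat_def
  set Q : ℝ → ℂ[X] := fun ε => (Qmat ε).det with hQ_def
  have hp0 : p ≠ 0 := by intro h; rw [h, Polynomial.natDegree_zero] at hckdeg; omega
  have hpmc0 : pmc ≠ 0 := by intro h; rw [h, Polynomial.natDegree_zero] at hmcdeg; omega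
  -- entries of affine pencils
  have haffdeg : ∀ (A B : Matrix (Fin n) (Fin n) ℂ) i j, ((affPencil A B) i j).natDegree ≤ 1 := by
    intro A B i j
    simp only [affPencil]
    refine (Polynomial.natDegree_add_le _ _).trans (max_le ?_ ?_)
    · exact (Polynomial.natDegree_C_mul_le _ _).trans (le_of_eq Polynomial.natDegree_X)
    · simp [Polynomial.natDegree_C]
  have haffcoeff : ∀ (A B : Matrix (Fin n) (Fin n) ℂ) i j, ((affPencil A B) i j).coeff 1 = A i j := by
    intro A B i j
    simp [affPencil, Polynomial.coeff_add, Polynomial.coeff_C_mul, Polynomial.coeff_C,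
      Polynomial.coeff_X]
  have hdetm0 : Matrix.det m ≠ 0 := by
    have h1 := coeff_det (affPencil m c) 1 (haffdeg m c)
    rw [mul_one] at h1
    have h2 : Matrix.det (fun i j => ((affPencil m c) i j).coeff 1) = Matrix.det m := by
      congr 1; funext i j; exact haffcoeff m c i j
    have h3 : pmc.coeff n ≠ 0 := by
      have heq : pmc.coeff n = pmc.leadingCoeff := by rw [Polynomial.leadingCoeff, hmcdeg]
      rw [heq]; exact Polynomial.leadingCoeff_ne_zero.2 hpmc0
    rw [← hpmc_def] at h1
    rw [h1, h2] at h3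
    exact h3
  have hpeval0 : p.eval 0 ≠ 0 := by
    intro h
    have hmem : (0:ℂ) ∈ p.roots := Polynomial.mem_roots'.2 ⟨hp0, h⟩
    rw [hp_def, hck] at hmem
    obtain ⟨i, _, hi⟩ := Multiset.mem_map.1 hmem
    exact hlam i hi
  have hdetk : p.eval 0 = Matrix.det k := by
    have h1 := RingHom.map_det (Polynomial.evalRingHom (0:ℂ)) (affPencil c k)
    have h2 : ((affPencil c k).map (Polynomial.evalRingHom (0:ℂ))) = k := by
      ext i j
      simp [affPencil, Matrix.map_apply, Polynomial.coe_evalRingHom]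
    rw [RingHom.mapMatrix_apply, h2] at h1
    rw [hp_def]
    exact h1
  have hdetk0 : Matrix.det k ≠ 0 := hdetk ▸ hpeval0
  -- quadratic pencil entries
  have hquaddeg : ∀ (ε:ℝ) i j, ((quadPencil m c k ε) i j).natDegree ≤ 2 := by
    intro ε i j
    simp only [quadPencil]
    refine (Polynomial.natDegree_add_le _ _).trans (max_le ((Polynomial.natDegree_add_le _ _).trans
      (max_le ?_ ?_)) ?_)
    · exact (Polynomial.natDegree_C_mul_le _ _).trans (le_of_eq (Polynomial.natDegree_X_pow 2))
    · exact ((Polynomial.natDegree_C_mul_le _ _).trans (le_of_eq Polynomial.natDegree_X)).trans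
        (by omega)
    · exact le_trans (le_of_eq (Polynomial.natDegree_C _)) (by omega)
  have hquadcoeff : ∀ (ε:ℝ) i j, ((quadPencil m c k ε) i j).coeff 2 = (ε:ℂ) * m i j := by
    intro ε i j
    simp only [quadPencil]
    rw [Polynomial.coeff_add, Polynomial.coeff_add, Polynomial.coeff_C_mul, Polynomial.coeff_C_mul,
      Polynomial.coeff_X_pow, Polynomial.coeff_C, Polynomial.coeff_X]
    norm_num
  have hPtop : ∀ ε : ℝ, (P ε).coeff (n*2) = (ε:ℂ)^n * Matrix.det m := by
    intro ε
    have h1 := coeff_det (quadPencil m c k ε) 2 (hquaddeg ε)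
    have h2 : (fun i j => ((quadPencil m c k ε) i j).coeff 2) = (ε:ℂ) • m := by
      funext i j; rw [hquadcoeff]; simp [Matrix.smul_apply, smul_eq_mul]
    rw [hP_def]
    rw [h1, h2, Matrix.det_smul, Fintype.card_fin]
  have hPdeg : ∀ ε : ℝ, ε ≠ 0 → (P ε).natDegree = n + n := by
    intro ε hε
    refine le_antisymm ((natDegree_det_le _ 2 (hquaddeg ε)).trans (le_of_eq (by ring))) ?_
    refine Polynomial.le_natDegree_of_ne_zero ?_
    rw [show n + n = n * 2 by ring, hPtop]
    exact mul_ne_zero (pow_ne_zero _ (Complex.ofReal_ne_zero.2 hε)) hdetm0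
  have hPeval : ∀ ε : ℝ, (P ε).eval 0 = Matrix.det k := by
    intro ε
    have h1 := RingHom.map_det (Polynomial.evalRingHom (0:ℂ)) (quadPencil m c k ε)
    have h2 : ((quadPencil m c k ε).map (Polynomial.evalRingHom (0:ℂ))) = k := by
      ext i j
      simp [quadPencil, Matrix.map_apply, Polynomial.coe_evalRingHom]
    rw [RingHom.mapMatrix_apply, h2] at h1
    exact h1
  -- Q entries
  have hQdeg2 : ∀ (ε:ℝ) i j, ((Qmat ε) i j).natDegree ≤ 2 := by
    intro ε i j
    simp only [hQmat_def]
    refine (Polynomial.natDegree_add_le _ _).trans (max_le ((Polynomial.natDegree_add_le _ _).trans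
      (max_le ?_ ?_)) ?_)
    · exact (Polynomial.natDegree_C_mul_le _ _).trans (le_of_eq (Polynomial.natDegree_X_pow 2))
    · exact ((Polynomial.natDegree_C_mul_le _ _).trans (le_of_eq Polynomial.natDegree_X)).trans
        (by omega)
    · exact le_trans (le_of_eq (Polynomial.natDegree_C _)) (by omega)
  have hQcoeff2 : ∀ (ε:ℝ) i j, ((Qmat ε) i j).coeff 2 = m i j := by
    intro ε i j
    simp only [hQmat_def]
    rw [Polynomial.coeff_add, Polynomial.coeff_add, Polynomial.coeff_C_mul, Polynomial.coeff_C_mul,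
      Polynomial.coeff_X_pow, Polynomial.coeff_C, Polynomial.coeff_X]
    norm_num
  have hQdeg : ∀ ε : ℝ, (Q ε).natDegree = n + n := by
    intro ε
    refine le_antisymm ((natDegree_det_le _ 2 (hQdeg2 ε)).trans (le_of_eq (by ring))) ?_
    refine Polynomial.le_natDegree_of_ne_zero ?_
    rw [show n + n = n * 2 by ring]
    have h1 := coeff_det (Qmat ε) 2 (hQdeg2 ε)
    have h2 : (fun i j => ((Qmat ε) i j).coeff 2) = m := by
      funext i j; rw [hQcoeff2]
    rw [hQ_def, h1, h2]
    exact hdetm0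
  -- two-variable determinants for coefficient continuity
  set Mp : Matrix (Fin n) (Fin n) (Polynomial (Polynomial ℂ)) :=
    fun i j => Polynomial.C ((affPencil c k) i j)
      + Polynomial.C (C (m i j) * X^2) * Polynomial.X with hMp_def
  set Mq : Matrix (Fin n) (Fin n) (Polynomial (Polynomial ℂ)) :=
    fun i j => Polynomial.C (C (m i j) * X^2 + C (c i j) * X)
      + Polynomial.C (C (k i j)) * Polynomial.X with hMq_def
  have hDPeval : ∀ ε : ℝ, (Mp.det).eval (Polynomial.C ((ε:ℂ))) = P ε := by
    intro ε
    have h1 := RingHom.map_det (Polynomial.evalRingHom (Polynomial.C ((ε:ℂ)))) Mp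
    rw [RingHom.mapMatrix_apply] at h1
    have h2 : Mp.map (Polynomial.eval (Polynomial.C ((ε:ℂ)))) = quadPencil m c k ε := by
      ext i j : 1
      rw [Matrix.map_apply]
      simp only [hMp_def, Matrix.map_apply, Polynomial.eval_add, Polynomial.eval_C,
        Polynomial.eval_mul, Polynomial.eval_X, affPencil, quadPencil]
      have h3 : (C (m i j) * X^2) * Polynomial.C ((ε:ℂ)) = C ((ε:ℂ) * m i j) * X ^ 2 := by
        rw [mul_right_comm, ← Polynomial.C_mul, mul_comm (m i j) ((ε:ℂ))]
      rw [h3]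
      ring
    rw [show Mp.map ⇑(Polynomial.evalRingHom (Polynomial.C ((ε:ℂ))))
        = Mp.map (Polynomial.eval (Polynomial.C ((ε:ℂ)))) from rfl, h2] at h1
    exact h1
  have hDP0 : (Mp.det).eval 0 = p := by
    have h1 := RingHom.map_det (Polynomial.evalRingHom (0 : ℂ[X])) Mp
    rw [RingHom.mapMatrix_apply] at h1
    have h2 : Mp.map (Polynomial.eval (0 : ℂ[X])) = affPencil c k := by
      ext i j : 1
      rw [Matrix.map_apply]
      simp [hMp_def, Matrix.map_apply, Polynomial.eval_add, Polynomial.eval_C,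
        Polynomial.eval_mul, Polynomial.eval_X]
    rw [show Mp.map ⇑(Polynomial.evalRingHom (0:ℂ[X]))
        = Mp.map (Polynomial.eval (0:ℂ[X])) from rfl, h2] at h1
    rw [hp_def]
    exact h1
  have hDQeval : ∀ ε : ℝ, (Mq.det).eval (Polynomial.C ((ε:ℂ))) = Q ε := by
    intro ε
    have h1 := RingHom.map_det (Polynomial.evalRingHom (Polynomial.C ((ε:ℂ)))) Mq
    rw [RingHom.mapMatrix_apply] at h1
    have h2 : Mq.map (Polynomial.eval (Polynomial.C ((ε:ℂ)))) = Qmat ε := by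
      ext i j : 1
      rw [Matrix.map_apply]
      simp only [hMq_def, Matrix.map_apply, Polynomial.eval_add, Polynomial.eval_C,
        Polynomial.eval_mul, Polynomial.eval_X, hQmat_def]
      have h3 : C (k i j) * Polynomial.C ((ε:ℂ)) = C ((ε:ℂ) * k i j) := by
        rw [← Polynomial.C_mul, mul_comm (k i j) ((ε:ℂ))]
      rw [h3]
    rw [show Mq.map ⇑(Polynomial.evalRingHom (Polynomial.C ((ε:ℂ))))
        = Mq.map (Polynomial.eval (Polynomial.C ((ε:ℂ)))) from rfl, h2] at h1
    exact h1
  have hDQ0 : (Mq.det).eval 0 = X^n * pmc := by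
    have h1 := RingHom.map_det (Polynomial.evalRingHom (0 : ℂ[X])) Mq
    rw [RingHom.mapMatrix_apply] at h1
    have h2 : Mq.map (Polynomial.eval (0 : ℂ[X])) = (X : ℂ[X]) • affPencil m c := by
      ext i j : 1
      rw [Matrix.map_apply]
      simp only [hMq_def, Matrix.map_apply, Polynomial.eval_add, Polynomial.eval_C,
        Polynomial.eval_mul, Polynomial.eval_X, Matrix.smul_apply, affPencil, smul_eq_mul]
      ring
    rw [show Mq.map ⇑(Polynomial.evalRingHom (0:ℂ[X]))
        = Mq.map (Polynomial.eval (0:ℂ[X])) from rfl, h2, Matrix.det_smul,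
      Fintype.card_fin] at h1
    rw [hpmc_def]
    exact h1
  have hPcoeff : ∀ j, Tendsto (fun ε : ℝ => (P ε).coeff j) l (𝓝 (p.coeff j)) := by
    intro j
    have h := tendsto_coeff_eval Mp.det j
    rw [hDP0] at h
    exact h.congr (fun ε => by rw [hDPeval])
  have hQcoeff : ∀ j, Tendsto (fun ε : ℝ => (Q ε).coeff j) l (𝓝 ((X^n * pmc).coeff j)) := by
    intro j
    have h := tendsto_coeff_eval Mq.det j
    rw [hDQ0] at h
    exact h.congr (fun ε => by rw [hDQeval])
  -- the limit polynomial on the Q side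
  have hqQ0 : (X^n * pmc : ℂ[X]) ≠ 0 := mul_ne_zero (pow_ne_zero _ Polynomial.X_ne_zero) hpmc0
  have hqQdeg : (X^n * pmc : ℂ[X]).natDegree = n + n := by
    rw [Polynomial.natDegree_mul (pow_ne_zero _ Polynomial.X_ne_zero) hpmc0,
      Polynomial.natDegree_X_pow, hmcdeg]
  have hcarduniv : (Multiset.card (univ : Finset (Fin n)).val) = n := by
    simpa using Finset.card_univ (α := Fin n)
  set lamQ : Fin (n+n) → ℂ := fun i => Sum.elim (fun _ => (0:ℂ)) mu (finSumFinEquiv.symm i)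
    with hlamQ_def
  have hlamQroots : (X^n * pmc : ℂ[X]).roots = Multiset.map lamQ univ.val := by
    rw [Polynomial.roots_mul hqQ0, Polynomial.roots_pow, Polynomial.roots_X,
      Multiset.nsmul_singleton, hmc, map_univ_fin_add lamQ]
    congr 1
    · rw [show (fun i : Fin n => lamQ (finSumFinEquiv (Sum.inl i))) = fun _ => (0:ℂ) from
        _root_.funext fun i => by simp only [hlamQ_def, Equiv.symm_apply_apply, Sum.elim_inr, Sum.elim_inl], Multiset.map_const', hcarduniv]
    · exact congrArg (fun f => Multiset.map f univ.val)
        (_root_.funext fun i => by simp only [hlamQ_def, Equiv.symm_apply_apply, Sum.elim_inr, Sum.elim_inl]).symm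
  -- continuity of roots on the Q side
  obtain ⟨rq, hrq_ev, hrq_lim⟩ := roots_continuity (n+n) (X^n * pmc) lamQ Q l
    hqQdeg hlamQroots hQcoeff (Filter.Eventually.of_forall (fun ε => hQdeg ε))
  -- the reflected family
  set Frev : ℝ → ℂ[X] := fun ε => Polynomial.reflect (n+n) (P ε) with hFrev_def
  set qP : ℂ[X] := Polynomial.reflect (n+n) p with hqP_def
  have hrevcoeff : ∀ j, Tendsto (fun ε : ℝ => (Frev ε).coeff j) l (𝓝 (qP.coeff j)) := by
    intro j
    simp only [hFrev_def, hqP_def, Polynomial.coeff_reflect]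
    exact hPcoeff _
  have hqPtop : qP.coeff (n+n) = p.eval 0 := by
    rw [hqP_def, Polynomial.coeff_reflect, Polynomial.revAt_le (le_refl _), Nat.sub_self,
      Polynomial.coeff_zero_eq_eval_zero]
  have hqP0 : qP ≠ 0 := by
    intro h
    rw [h] at hqPtop
    simp at hqPtop
    exact hpeval0 hqPtop.symm
  have hqPdeg : qP.natDegree = n + n := by
    refine le_antisymm (Polynomial.natDegree_le_iff_coeff_eq_zero.2 (fun N hN => ?_)) ?_
    · rw [hqP_def, Polynomial.coeff_reflect, Polynomial.revAt_eq_self_of_lt hN]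
      exact Polynomial.coeff_eq_zero_of_natDegree_lt (by rw [hckdeg]; omega)
    · refine Polynomial.le_natDegree_of_ne_zero ?_
      rw [hqPtop]
      exact hpeval0
  -- factor qP = reflect n p * X^n
  have hqPfact : qP = Polynomial.reflect n p * X^n := by
    ext j
    rw [hqP_def, Polynomial.coeff_reflect, Polynomial.coeff_mul_X_pow']
    by_cases h1 : n ≤ j
    · rw [if_pos h1, Polynomial.coeff_reflect]
      by_cases h2 : j ≤ n + n
      · rw [Polynomial.revAt_le h2, Polynomial.revAt_le (by omega : j - n ≤ n)]
        congr 1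
        omega
      · rw [Polynomial.revAt_eq_self_of_lt (by omega), Polynomial.revAt_eq_self_of_lt (by omega)]
        rw [Polynomial.coeff_eq_zero_of_natDegree_lt (by rw [hckdeg]; omega),
          Polynomial.coeff_eq_zero_of_natDegree_lt (by rw [hckdeg]; omega)]
    · rw [if_neg h1, Polynomial.revAt_le (by omega : j ≤ n + n)]
      exact Polynomial.coeff_eq_zero_of_natDegree_lt (by rw [hckdeg]; omega)
  have hreflnp : (Polynomial.reflect n p).roots = Multiset.map (fun i => (lam i)⁻¹) univ.val := by
    have h0 : ∀ z ∈ p.roots, z ≠ 0 := by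
      intro z hz
      rw [hp_def, hck] at hz
      obtain ⟨i, _, hi⟩ := Multiset.mem_map.1 hz
      rw [← hi]
      exact hlam i
    have := roots_reflect p hp0 h0
    rw [hckdeg] at this
    rw [this, hp_def, hck, Multiset.map_map]
    rfl
  set lamP : Fin (n+n) → ℂ :=
    fun i => Sum.elim (fun _ => (0:ℂ)) (fun a => (lam a)⁻¹) (finSumFinEquiv.symm i)
    with hlamP_def
  have hqProots : qP.roots = Multiset.map lamP univ.val := by
    have hXn0 : (X^n : ℂ[X]) ≠ 0 := pow_ne_zero _ Polynomial.X_ne_zero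
    have hrnp0 : Polynomial.reflect n p ≠ 0 := by
      intro h
      rw [hqPfact, h, zero_mul] at hqP0
      exact hqP0 rfl
    rw [hqPfact, Polynomial.roots_mul (mul_ne_zero hrnp0 hXn0), Polynomial.roots_pow,
      Polynomial.roots_X, Multiset.nsmul_singleton, hreflnp, map_univ_fin_add lamP, add_comm]
    congr 1
    · rw [show (fun i : Fin n => lamP (finSumFinEquiv (Sum.inl i))) = fun _ => (0:ℂ) from
        _root_.funext fun i => by simp only [hlamP_def, Equiv.symm_apply_apply, Sum.elim_inl],
        Multiset.map_const', hcarduniv]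
    · exact congrArg (fun f => Multiset.map f univ.val)
        (_root_.funext fun i => by
          simp only [hlamP_def, Equiv.symm_apply_apply, Sum.elim_inr]).symm
  have hrevdeg : ∀ ε : ℝ, ε ≠ 0 → (Frev ε).natDegree = n + n := by
    intro ε hε
    refine le_antisymm (Polynomial.natDegree_le_iff_coeff_eq_zero.2 (fun N hN => ?_)) ?_
    · rw [hFrev_def, Polynomial.coeff_reflect, Polynomial.revAt_eq_self_of_lt hN]
      exact Polynomial.coeff_eq_zero_of_natDegree_lt (by rw [hPdeg ε hε]; omega)
    · refine Polynomial.le_natDegree_of_ne_zero ?_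
      rw [hFrev_def, Polynomial.coeff_reflect, Polynomial.revAt_le (le_refl _), Nat.sub_self,
        Polynomial.coeff_zero_eq_eval_zero, hPeval]
      exact hdetk0
  have hεne : ∀ᶠ ε in l, ε ≠ 0 := by
    filter_upwards [self_mem_nhdsWithin] with ε hε
    exact ne_of_gt hε
  obtain ⟨rr, hrr_ev, hrr_lim⟩ := roots_continuity (n+n) qP lamP Frev l
    hqPdeg hqProots hrevcoeff (by filter_upwards [hεne] with ε hε; exact hrevdeg ε hε)
  -- scaling identity relating the roots of P and Q
  have hQPcomp : ∀ ε : ℝ, (Q ε).comp (C ((ε:ℂ)) * X) = C ((ε:ℂ)^n) * P ε := by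
    intro ε
    set φ : ℂ[X] →+* ℂ[X] := Polynomial.eval₂RingHom Polynomial.C (C ((ε:ℂ)) * X) with hφ_def
    have hcomp : (Q ε).comp (C ((ε:ℂ)) * X) = φ (Q ε) := rfl
    rw [hcomp, hQ_def]
    have h1 := RingHom.map_det φ (Qmat ε)
    rw [RingHom.mapMatrix_apply] at h1
    have h2 : (Qmat ε).map φ = (C ((ε:ℂ))) • quadPencil m c k ε := by
      ext i j : 1
      rw [Matrix.map_apply]
      simp only [Matrix.map_apply, hQmat_def, Matrix.smul_apply, quadPencil, smul_eq_mul,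
        hφ_def, Polynomial.coe_eval₂RingHom, Polynomial.eval₂_add, Polynomial.eval₂_mul,
        Polynomial.eval₂_C, Polynomial.eval₂_X, Polynomial.eval₂_X_pow, Polynomial.C_mul]
      ring
    rw [h2, Matrix.det_smul, Fintype.card_fin, ← Polynomial.C_pow] at h1
    exact h1
  -- the selected root functions
  set L : Fin n → ℝ → ℂ := fun i ε => (rr (finSumFinEquiv (Sum.inr i)) ε)⁻¹ with hL_def
  set L' : Fin n → ℝ → ℂ := fun i ε => ((ε:ℂ))⁻¹ * rq (finSumFinEquiv (Sum.inr i)) ε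
    with hL'_def
  have hLlim : ∀ i, Tendsto (fun ε => L i ε) l (𝓝 (lam i)) := by
    intro i
    have h1 := hrr_lim (finSumFinEquiv (Sum.inr i))
    have h2 : lamP (finSumFinEquiv (Sum.inr i)) = (lam i)⁻¹ := by
      simp only [hlamP_def, Equiv.symm_apply_apply, Sum.elim_inr]
    rw [h2] at h1
    have h3 := h1.inv₀ (inv_ne_zero (hlam i))
    rwa [inv_inv] at h3
  have hL'lim : ∀ i, Tendsto (fun ε : ℝ => (ε:ℂ) * L' i ε) l (𝓝 (mu i)) := by
    intro i
    have h1 := hrq_lim (finSumFinEquiv (Sum.inr i))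
    have h2 : lamQ (finSumFinEquiv (Sum.inr i)) = mu i := by
      simp only [hlamQ_def, Equiv.symm_apply_apply, Sum.elim_inr]
    rw [h2] at h1
    refine h1.congr' ?_
    filter_upwards [hεne] with ε hε
    rw [hL'_def]
    simp only []
    rw [← mul_assoc, mul_inv_cancel₀ (Complex.ofReal_ne_zero.2 hε), one_mul]
  -- a radius separating the finite limit roots from the diverging ones
  set R : ℝ := 1 + ∑ i : Fin n, ‖lam i‖ with hR_def
  have hR0 : 0 < R := by
    rw [hR_def]; positivity
  have hRlam : ∀ i, ‖lam i‖ < R := by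
    intro i
    rw [hR_def]
    have h1 : ‖lam i‖ ≤ ∑ j : Fin n, ‖lam j‖ :=
      Finset.single_le_sum (f := fun j => ‖lam j‖) (fun j _ => norm_nonneg _) (Finset.mem_univ i)
    linarith
  have ev1 : ∀ᶠ ε in l, ∀ i : Fin n, ‖rr (finSumFinEquiv (Sum.inl i)) ε‖ < R⁻¹ := by
    rw [Filter.eventually_all]
    intro i
    have h1 := (hrr_lim (finSumFinEquiv (Sum.inl i))).norm
    have h2 : lamP (finSumFinEquiv (Sum.inl i)) = 0 := by
      simp only [hlamP_def, Equiv.symm_apply_apply, Sum.elim_inl]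
    rw [h2, norm_zero] at h1
    exact h1.eventually_lt_const (inv_pos.2 hR0)
  have ev2 : ∀ᶠ ε in l, ∀ i : Fin n, ‖L i ε‖ < R := by
    rw [Filter.eventually_all]
    intro i
    exact ((hLlim i).norm).eventually_lt_const (hRlam i)
  have ev3 : ∀ᶠ ε in l, ∀ i : Fin n, R < ‖L' i ε‖ := by
    rw [Filter.eventually_all]
    intro i
    have h2 : lamQ (finSumFinEquiv (Sum.inr i)) = mu i := by
      simp only [hlamQ_def, Equiv.symm_apply_apply, Sum.elim_inr]
    have hbig : Tendsto (fun ε : ℝ => ‖L' i ε‖) l atTop := by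
      have hinv : Tendsto (fun ε : ℝ => ‖((ε:ℂ))⁻¹‖) l atTop := by
        refine Tendsto.congr' ?_ tendsto_inv_nhdsGT_zero
        filter_upwards [self_mem_nhdsWithin] with ε (hε : (0:ℝ) < ε)
        rw [norm_inv, Complex.norm_real, Real.norm_eq_abs, abs_of_pos hε]
      have hnorm : Tendsto (fun ε : ℝ => ‖rq (finSumFinEquiv (Sum.inr i)) ε‖) l (𝓝 ‖mu i‖) := by
        have h3 := (hrq_lim (finSumFinEquiv (Sum.inr i))).norm
        rwa [h2] at h3
      have h4 := hinv.atTop_mul_pos (norm_pos_iff.2 (hmu i)) hnorm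
      refine h4.congr (fun ε => ?_)
      rw [hL'_def]
      simp only []
      rw [norm_mul]
    exact hbig.eventually_gt_atTop R
  -- the key eventual statement
  have hkey : ∀ᶠ ε in l, (P ε).natDegree = n + n ∧
      (P ε).roots = Multiset.map (fun i => L i ε) univ.val
        + Multiset.map (fun i => L' i ε) univ.val := by
    filter_upwards [hεne, hrq_ev, hrr_ev, ev1, ev2, ev3]
      with ε hεne0 hrqε hrrε h1ε h2ε h3ε
    have hP2 : (P ε).natDegree = n + n := hPdeg ε hεne0
    have hPne : P ε ≠ 0 := by
      intro h; rw [h, Polynomial.natDegree_zero] at hP2; omega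
    have hnozero : ∀ z ∈ (P ε).roots, z ≠ 0 := by
      intro z hz h0
      rw [h0] at hz
      have h5 := Polynomial.isRoot_of_mem_roots hz
      rw [Polynomial.IsRoot, hPeval ε] at h5
      exact hdetk0 h5
    have hrev : (Frev ε).roots = Multiset.map (fun z => z⁻¹) (P ε).roots := by
      have h6 := roots_reflect (P ε) hPne hnozero
      rw [hP2] at h6
      exact h6
    have hProots1 : (P ε).roots = Multiset.map (fun i => (rr i ε)⁻¹) univ.val := by
      have h4 : Multiset.map (fun z : ℂ => z⁻¹) ((Frev ε).roots) = (P ε).roots := by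
        rw [hrev, Multiset.map_map]
        rw [show ((fun z : ℂ => z⁻¹) ∘ fun z : ℂ => z⁻¹) = id from _root_.funext fun z => inv_inv z,
          Multiset.map_id]
      rw [← h4, hrrε, Multiset.map_map]
      rfl
    have hProots2 : (P ε).roots = Multiset.map (fun i => ((ε:ℂ))⁻¹ * rq i ε) univ.val := by
      have h5 := roots_comp_C_mul_X (Q ε) (Complex.ofReal_ne_zero.2 hεne0)
      rw [hQPcomp ε, Polynomial.roots_C_mul _ (pow_ne_zero n (Complex.ofReal_ne_zero.2 hεne0))]
        at h5
      rw [h5, hrqε, Multiset.map_map]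
      rfl
    have hA := map_univ_fin_add (fun i : Fin (n+n) => (rr i ε)⁻¹)
    have hB := map_univ_fin_add (fun i : Fin (n+n) => ((ε:ℂ))⁻¹ * rq i ε)
    set A1 := Multiset.map (fun i : Fin n => (rr (finSumFinEquiv (Sum.inl i)) ε)⁻¹) univ.val
      with hA1_def
    set A2 := Multiset.map (fun i : Fin n => (rr (finSumFinEquiv (Sum.inr i)) ε)⁻¹) univ.val
      with hA2_def
    set B1 := Multiset.map (fun i : Fin n => ((ε:ℂ))⁻¹ * rq (finSumFinEquiv (Sum.inl i)) ε)
      univ.val with hB1_def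
    set B2 := Multiset.map (fun i : Fin n => ((ε:ℂ))⁻¹ * rq (finSumFinEquiv (Sum.inr i)) ε)
      univ.val with hB2_def
    have hAB : A1 + A2 = B1 + B2 := by
      rw [hA1_def, hA2_def, hB1_def, hB2_def, ← hA, ← hB, ← hProots1, ← hProots2]
    have hA1big : ∀ a ∈ A1, ¬ ‖a‖ < R := by
      intro a ha
      rw [hA1_def] at ha
      obtain ⟨i, _, rfl⟩ := Multiset.mem_map.1 ha
      have hmem : rr (finSumFinEquiv (Sum.inl i)) ε ∈ (Frev ε).roots := by
        rw [hrrε]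
        exact Multiset.mem_map.2 ⟨_, Finset.mem_univ_val _, rfl⟩
      have hne0 : rr (finSumFinEquiv (Sum.inl i)) ε ≠ 0 := by
        intro h0
        have h7 := Polynomial.isRoot_of_mem_roots hmem
        rw [h0, Polynomial.IsRoot, ← Polynomial.coeff_zero_eq_eval_zero, hFrev_def] at h7
        simp only [Polynomial.coeff_reflect, Polynomial.revAt_zero] at h7
        rw [show n+n = n*2 by ring, hPtop ε] at h7
        exact (mul_ne_zero (pow_ne_zero _ (Complex.ofReal_ne_zero.2 hεne0)) hdetm0) h7
      intro hcon
      rw [norm_inv] at hcon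
      have hpos : 0 < ‖rr (finSumFinEquiv (Sum.inl i)) ε‖ := norm_pos_iff.2 hne0
      have h8 := inv_strictAnti₀ hpos (h1ε i)
      rw [inv_inv] at h8
      -- h8 : R < ‖rr ...‖⁻¹ ; hcon : ‖rr ...‖⁻¹ < R
      linarith
    have hA2small : ∀ a ∈ A2, ‖a‖ < R := by
      intro a ha
      rw [hA2_def] at ha
      obtain ⟨i, _, rfl⟩ := Multiset.mem_map.1 ha
      exact h2ε i
    have hB2big : ∀ a ∈ B2, ¬ ‖a‖ < R := by
      intro a ha
      rw [hB2_def] at ha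
      obtain ⟨i, _, rfl⟩ := Multiset.mem_map.1 ha
      exact not_lt.2 (le_of_lt (h3ε i))
    have hfilter := congrArg (Multiset.filter (fun z : ℂ => ‖z‖ < R)) hAB
    rw [Multiset.filter_add, Multiset.filter_add, Multiset.filter_eq_nil.2 hA1big,
      Multiset.filter_eq_self.2 hA2small, Multiset.filter_eq_nil.2 hB2big, zero_add,
      add_zero] at hfilter
    have hcards : Multiset.card B1 ≤ Multiset.card A2 := by
      rw [hA2_def, hB1_def, Multiset.card_map, Multiset.card_map]
    have hA2B1 : A2 = B1 :=
      Multiset.eq_of_le_of_card_le (hfilter ▸ Multiset.filter_le _ B1) hcards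
    refine ⟨hP2, ?_⟩
    calc (P ε).roots = B1 + B2 := by rw [hProots2, hB]
      _ = A2 + B2 := by rw [hA2B1]
      _ = Multiset.map (fun i => L i ε) univ.val + Multiset.map (fun i => L' i ε) univ.val := rfl
  -- convert to an explicit interval
  obtain ⟨ε₀, hε₀, hIoo⟩ := (mem_nhdsGT_iff_exists_Ioo_subset).1 hkey
  refine ⟨ε₀, hε₀, L, L', ?_, hLlim, hL'lim⟩
  intro ε hε
  obtain ⟨hd, hr⟩ := hIoo hε
  constructor
  · rw [show (quadPencil m c k ε).det = P ε from rfl, hd]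
    ring
  · rw [show (quadPencil m c k ε).det = P ε from rfl]
    exact hr
end
end

section
/- (iii) Under the Weierstrass-form hypothesis on the pencil X c + k, the pencil 𝒜_ε = ε X² m + X c + k has at least 2 q_0 − q'_0 eigenvalues identically equal to zero: for every ε > 0, the multiplicity of 0 as a root of the polynomial det(𝒜_ε) ∈ ℂ[X] is at least 2 q_0 − q'_0. -/
open Polynomial Filter Topology Finset

noncomputable section

/-- The `s × s` Jordan block `J_s(α)`, with `α` on the diagonal and `1` on the
superdiagonal. -/
def jordanBlock (s : ℕ) (α : ℂ) : Matrix (Fin s) (Fin s) ℂ :=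
  fun i j => if (j : ℕ) = (i : ℕ) then α else if (j : ℕ) = (i : ℕ) + 1 then 1 else 0

/-- **The Weierstrass-form hypothesis on the pencil `X c + k`**: there are invertible
matrices `P, Q` such that `P (X c + k) Q` is the block-diagonal pencil
`(X·I + J) ⊕ (X·N + I)`, where `J` is block diagonal made of `bJ` Jordan blocks
`J_{szJ i}(αJ i)` (those with `αJ i = 0` being the nilpotent ones, of sizes
`s_0^1, …, s_0^{q_0}`), and `N` is block diagonal made of `qinf` nilpotent Jordan
blocks `J_{szN i}(0)` (of sizes `s_∞^1, …, s_∞^{q_∞}`). -/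
structure WeierstrassForm (n : ℕ) (c k : Matrix (Fin n) (Fin n) ℂ) where
  /-- number of Jordan blocks of `J` -/
  bJ : ℕ
  /-- sizes of the Jordan blocks of `J` -/
  szJ : Fin bJ → ℕ
  szJ_pos : ∀ i, 1 ≤ szJ i
  /-- eigenvalues of the Jordan blocks of `J` -/
  αJ : Fin bJ → ℂ
  /-- number of (nilpotent) Jordan blocks of `N` -/
  qinf : ℕ
  /-- sizes of the Jordan blocks of `N` -/
  szN : Fin qinf → ℕ
  szN_pos : ∀ i, 1 ≤ szN i
  /-- identification of the index set with the blocks -/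
  e : Fin n ≃ ((Σ i : Fin bJ, Fin (szJ i)) ⊕ (Σ i : Fin qinf, Fin (szN i)))
  P : Matrix (Fin n) (Fin n) ℂ
  Q : Matrix (Fin n) (Fin n) ℂ
  hP : IsUnit P.det
  hQ : IsUnit Q.det
  hW : P.map Polynomial.C * affPencil c k * Q.map Polynomial.C =
    (Matrix.fromBlocks
      (fun a b => (if a = b then (X : Polynomial ℂ) else 0) +
        Polynomial.C (Matrix.blockDiagonal'
          (fun i => jordanBlock (szJ i) (αJ i)) a b))
      0 0
      (fun a b => Polynomial.C (Matrix.blockDiagonal'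
          (fun i => jordanBlock (szN i) 0) a b) * X +
        (if a = b then 1 else 0))).submatrix e e

namespace WeierstrassForm

variable {n : ℕ} {c k : Matrix (Fin n) (Fin n) ℂ} (W : WeierstrassForm n c k)

/-- `q_0`: the number of nilpotent Jordan blocks of `J`. -/
def q0 : ℕ := (Finset.univ.filter fun i => W.αJ i = 0).card

/-- `q'_0`: the number of one-dimensional nilpotent Jordan blocks of `J`. -/
def q0' : ℕ := (Finset.univ.filter fun i => W.αJ i = 0 ∧ W.szJ i = 1).card

/-- `d_0 = s_0^1 + ⋯ + s_0^{q_0}`. -/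
def d0 : ℕ := ∑ i ∈ Finset.univ.filter (fun i => W.αJ i = 0), W.szJ i

/-- `d_∞ = s_∞^1 + ⋯ + s_∞^{q_∞}`. -/
def dinf : ℕ := ∑ i, W.szN i

/-- `r = n − d_0 − d_∞`, the number of finite nonzero eigenvalues of `X c + k`. -/
def r : ℕ := n - W.d0 - W.dinf

end WeierstrassForm

open scoped Classical in
/-- Row weights for the valuation argument. -/
def Uw {n : ℕ} {c k : Matrix (Fin n) (Fin n) ℂ} (W : WeierstrassForm n c k) :
    ((Σ i : Fin W.bJ, Fin (W.szJ i)) ⊕ (Σ i : Fin W.qinf, Fin (W.szN i))) → ℕ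
  | .inl ⟨p, a⟩ => if W.αJ p = 0 ∧ (a : ℕ) + 1 = W.szJ p then 1 else 0
  | .inr _ => 0

open scoped Classical in
/-- Column weights for the valuation argument. -/
def Vw {n : ℕ} {c k : Matrix (Fin n) (Fin n) ℂ} (W : WeierstrassForm n c k) :
    ((Σ i : Fin W.bJ, Fin (W.szJ i)) ⊕ (Σ i : Fin W.qinf, Fin (W.szN i))) → ℕ
  | .inl ⟨p, b⟩ => if W.αJ p = 0 ∧ ((b : ℕ) = 0 ∧ 2 ≤ W.szJ p) then 1 else 0
  | .inr _ => 0

lemma Uw_le_one {n : ℕ} {c k : Matrix (Fin n) (Fin n) ℂ} (W : WeierstrassForm n c k)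
    (a : (Σ i : Fin W.bJ, Fin (W.szJ i)) ⊕ (Σ i : Fin W.qinf, Fin (W.szN i))) :
    Uw W a ≤ 1 := by
  rcases a with ⟨p, x⟩ | a
  · simp only [Uw]; split <;> omega
  · simp [Uw]

lemma Vw_le_one {n : ℕ} {c k : Matrix (Fin n) (Fin n) ℂ} (W : WeierstrassForm n c k)
    (a : (Σ i : Fin W.bJ, Fin (W.szJ i)) ⊕ (Σ i : Fin W.qinf, Fin (W.szN i))) :
    Vw W a ≤ 1 := by
  rcases a with ⟨p, x⟩ | a
  · simp only [Vw]; split <;> omega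
  · simp [Vw]

theorem det_dvd_of_weights {R : Type*} [CommRing R] {ι : Type*} [Fintype ι] [DecidableEq ι]
    (x : R) (B : Matrix ι ι R) (u v : ι → ℕ)
    (h : ∀ i j, x ^ (u i + v j) ∣ B i j) :
    x ^ (∑ i, u i + ∑ j, v j) ∣ B.det := by
  rw [Matrix.det_apply]
  refine Finset.dvd_sum fun σ _ => ?_
  rw [Units.smul_def, zsmul_eq_mul]
  refine Dvd.dvd.mul_left ?_ _
  have h1 : ∏ i, x ^ (u (σ i) + v i) ∣ ∏ i, B (σ i) i :=
    Finset.prod_dvd_prod_of_dvd _ _ (fun i _ => h (σ i) i)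
  refine dvd_trans (dvd_of_eq ?_) h1
  rw [Finset.prod_pow_eq_pow_sum, Finset.sum_add_distrib]
  congr 2
  exact (Equiv.sum_comp σ u).symm

lemma sum_ind_last {s : ℕ} (hs : 1 ≤ s) (p : Prop) [Decidable p] :
    ∑ a : Fin s, (if p ∧ (a : ℕ) + 1 = s then (1:ℕ) else 0) = if p then 1 else 0 := by
  by_cases hp : p
  · simp only [hp, true_and, if_true]
    have he : ∀ a : Fin s, ((a : ℕ) + 1 = s) ↔ a = ⟨s - 1, by omega⟩ := by
      intro a; rw [Fin.ext_iff]; simp; omega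
    calc ∑ a : Fin s, (if (a : ℕ) + 1 = s then (1:ℕ) else 0)
        = ∑ a : Fin s, (if a = ⟨s-1, by omega⟩ then 1 else 0) :=
          Finset.sum_congr rfl fun a _ => by rw [if_congr (he a) rfl rfl]
      _ = 1 := by rw [Finset.sum_ite_eq' Finset.univ]; simp
  · simp [hp]

lemma sum_ind_zero {s : ℕ} (hs : 1 ≤ s) (p q : Prop) [Decidable p] [Decidable q] :
    ∑ a : Fin s, (if p ∧ ((a : ℕ) = 0 ∧ q) then (1:ℕ) else 0) = if p ∧ q then 1 else 0 := by
  by_cases hpq : p ∧ q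
  · rw [if_pos hpq]
    have he : ∀ a : Fin s, (p ∧ ((a : ℕ) = 0 ∧ q)) ↔ a = ⟨0, by omega⟩ := by
      intro a; rw [Fin.ext_iff]; simp only [Fin.val_mk]; tauto
    calc ∑ a : Fin s, (if p ∧ ((a : ℕ) = 0 ∧ q) then (1:ℕ) else 0)
        = ∑ a : Fin s, (if a = ⟨0, by omega⟩ then 1 else 0) :=
          Finset.sum_congr rfl fun a _ => by rw [if_congr (he a) rfl rfl]
      _ = 1 := by rw [Finset.sum_ite_eq' Finset.univ]; simp
  · have he : ∀ a : Fin s, ¬ (p ∧ ((a : ℕ) = 0 ∧ q)) := by tauto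
    simp only [hpq, if_false]
    rw [Finset.sum_congr rfl fun a _ => if_neg (he a)]
    simp

/-- **Corollary 1 (iii).**  Under the Weierstrass-form hypothesis on `X c + k`, the
pencil `𝒜_ε = ε X² m + X c + k` has at least `2 q_0 − q'_0` eigenvalues identically
equal to zero: for every `ε > 0`, the multiplicity of `0` as a root of the polynomial
`det 𝒜_ε ∈ ℂ[X]` is at least `2 q_0 − q'_0` (expressed as `X^{2q_0 − q'_0} ∣ det 𝒜_ε`,
so that the statement also covers the degenerate case `det 𝒜_ε = 0`). -/
theorem corollary_iii
    (n : ℕ) (hn : 1 ≤ n) (m c k : Matrix (Fin n) (Fin n) ℂ)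
    (W : WeierstrassForm n c k) :
    ∀ ε : ℝ, 0 < ε →
      (X : Polynomial ℂ) ^ (2 * W.q0 - W.q0') ∣ (quadPencil m c k ε).det := by
  classical
  intro ε hε
  set Pc : Matrix (Fin n) (Fin n) (Polynomial ℂ) := W.P.map Polynomial.C with hPc
  set Qc : Matrix (Fin n) (Fin n) (Polynomial ℂ) := W.Q.map Polynomial.C with hQc
  set D := (Matrix.fromBlocks
      (fun a b => (if a = b then (X : Polynomial ℂ) else 0) +
        Polynomial.C (Matrix.blockDiagonal'
          (fun i => jordanBlock (W.szJ i) (W.αJ i)) a b))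
      0 0
      (fun a b => Polynomial.C (Matrix.blockDiagonal'
          (fun i => jordanBlock (W.szN i) 0) a b) * X +
        (if a = b then 1 else 0))) with hD
  have hq : quadPencil m c k ε =
      affPencil c k + (Polynomial.C (ε:ℂ) * X ^ 2) • (m.map Polynomial.C) := by
    ext i j
    simp only [quadPencil, affPencil, Matrix.add_apply, Matrix.smul_apply,
      Matrix.map_apply, smul_eq_mul, map_mul]
    ring
  have hsplit : Pc * quadPencil m c k ε * Qc =
      D.submatrix W.e W.e +
        (Polynomial.C (ε:ℂ) * X ^ 2) • (Pc * m.map Polynomial.C * Qc) := by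
    rw [hq, Matrix.mul_add, Matrix.add_mul, Matrix.mul_smul, Matrix.smul_mul]
    congr 1
    exact W.hW
  -- blockwise divisibility of the entries of D
  have hDdvd : ∀ a b, (X : Polynomial ℂ) ^ (Uw W a + Vw W b) ∣ D a b := by
    rintro (⟨p, x⟩ | a) (⟨p', y⟩ | b)
    · -- both in the J part
      simp only [hD, Matrix.fromBlocks_apply₁₁, Uw, Vw]
      erw [Matrix.fromBlocks_apply₁₁]
      by_cases hp : p = p'
      · subst hp
        rw [Matrix.blockDiagonal'_apply_eq]
        have hxlt : (x : ℕ) < W.szJ p := x.isLt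
        have hylt : (y : ℕ) < W.szJ p := y.isLt
        by_cases hU : W.αJ p = 0 ∧ (x : ℕ) + 1 = W.szJ p <;>
          by_cases hV : W.αJ p = 0 ∧ ((y : ℕ) = 0 ∧ 2 ≤ W.szJ p)
        · -- exponent 2, the entry vanishes
          obtain ⟨h0, hx⟩ := hU
          obtain ⟨-, hy0, hy2⟩ := hV
          have hxy : ¬ ((⟨p, x⟩ : Σ i, Fin (W.szJ i)) = ⟨p, y⟩) := by
            simp only [Sigma.mk.inj_iff, heq_eq_eq, true_and]
            intro h; rw [Fin.ext_iff] at h; omega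
          rw [if_neg hxy]
          have hj : jordanBlock (W.szJ p) (W.αJ p) x y = 0 := by
            simp only [jordanBlock]
            rw [if_neg (by omega), if_neg (by omega)]
          rw [hj, map_zero, add_zero]
          exact dvd_zero _
        · -- row weight 1, need X ∣ entry
          obtain ⟨h0, hx⟩ := hU
          rw [if_pos ⟨h0, hx⟩, if_neg hV, add_zero, pow_one]
          by_cases hxy : x = y
          · subst hxy
            rw [if_pos rfl]
            have hj : jordanBlock (W.szJ p) (W.αJ p) x x = 0 := by
              simp [jordanBlock, h0]
            rw [hj, map_zero, add_zero]
          · have hsne : ¬ ((⟨p, x⟩ : Σ i, Fin (W.szJ i)) = ⟨p, y⟩) := by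
              simp only [Sigma.mk.inj_iff, heq_eq_eq, true_and]; exact hxy
            have hyx : (y : ℕ) ≠ (x : ℕ) := fun h => hxy (Fin.ext h.symm)
            rw [if_neg hsne, zero_add]
            have hj : jordanBlock (W.szJ p) (W.αJ p) x y = 0 := by
              simp only [jordanBlock]
              rw [if_neg hyx, if_neg (by omega)]
            rw [hj, map_zero]
            exact dvd_zero _
        · -- column weight 1, need X ∣ entry
          obtain ⟨h0, hy0, hy2⟩ := hV
          rw [if_neg hU, if_pos ⟨h0, hy0, hy2⟩, zero_add, pow_one]
          by_cases hxy : x = y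
          · subst hxy
            rw [if_pos rfl]
            have hj : jordanBlock (W.szJ p) (W.αJ p) x x = 0 := by
              simp [jordanBlock, h0]
            rw [hj, map_zero, add_zero]
          · have hsne : ¬ ((⟨p, x⟩ : Σ i, Fin (W.szJ i)) = ⟨p, y⟩) := by
              simp only [Sigma.mk.inj_iff, heq_eq_eq, true_and]; exact hxy
            have hyx : (y : ℕ) ≠ (x : ℕ) := fun h => hxy (Fin.ext h.symm)
            rw [if_neg hsne, zero_add]
            have hj : jordanBlock (W.szJ p) (W.αJ p) x y = 0 := by
              simp only [jordanBlock]
              rw [if_neg hyx, if_neg (by omega)]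
            rw [hj, map_zero]
            exact dvd_zero _
        · rw [if_neg hU, if_neg hV, add_zero, pow_zero]
          exact one_dvd _
      · have hsne : ¬ ((⟨p, x⟩ : Σ i, Fin (W.szJ i)) = ⟨p', y⟩) := by
          simp only [Sigma.mk.inj_iff]
          exact fun h => hp h.1
        rw [if_neg hsne, Matrix.blockDiagonal'_apply_ne _ _ _ hp, map_zero, zero_add]
        exact dvd_zero _
    · simp only [hD, Matrix.fromBlocks_apply₁₂, Matrix.zero_apply]
      exact dvd_zero _
    · simp only [hD, Matrix.fromBlocks_apply₂₁, Matrix.zero_apply]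
      exact dvd_zero _
    · simp only [Uw, Vw, pow_zero]
      exact one_dvd _
  -- entrywise divisibility for the conjugated pencil
  have hentry : ∀ i j, (X : Polynomial ℂ) ^ (Uw W (W.e i) + Vw W (W.e j)) ∣
      (Pc * quadPencil m c k ε * Qc) i j := by
    intro i j
    rw [hsplit, Matrix.add_apply, Matrix.smul_apply, Matrix.submatrix_apply, smul_eq_mul]
    refine dvd_add (hDdvd _ _) ?_
    have h2 : Uw W (W.e i) + Vw W (W.e j) ≤ 2 := by
      have := Uw_le_one W (W.e i); have := Vw_le_one W (W.e j); omega
    refine (pow_dvd_pow X h2).trans ?_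
    rw [mul_assoc]
    exact (dvd_mul_right _ _).mul_left _
  have key := det_dvd_of_weights (X : Polynomial ℂ) (Pc * quadPencil m c k ε * Qc)
    (fun i => Uw W (W.e i)) (fun j => Vw W (W.e j)) hentry
  -- computing the weight sums
  have hU : ∑ i, Uw W (W.e i) = W.q0 := by
    rw [Equiv.sum_comp W.e (Uw W), Fintype.sum_sum_type]
    have h2 : ∑ a : Σ i : Fin W.qinf, Fin (W.szN i), Uw W (Sum.inr a) = 0 := by
      simp [Uw]
    rw [h2, add_zero, ← Finset.univ_sigma_univ, Finset.sum_sigma]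
    have h1 : ∀ p : Fin W.bJ, ∑ a : Fin (W.szJ p), Uw W (Sum.inl ⟨p, a⟩) =
        if W.αJ p = 0 then 1 else 0 := fun p => sum_ind_last (W.szJ_pos p) _
    rw [Finset.sum_congr rfl fun p _ => h1 p, WeierstrassForm.q0, Finset.card_filter]
  have hV : ∑ j, Vw W (W.e j) =
      (Finset.univ.filter fun p : Fin W.bJ => W.αJ p = 0 ∧ 2 ≤ W.szJ p).card := by
    rw [Equiv.sum_comp W.e (Vw W), Fintype.sum_sum_type]
    have h2 : ∑ a : Σ i : Fin W.qinf, Fin (W.szN i), Vw W (Sum.inr a) = 0 := by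
      simp [Vw]
    rw [h2, add_zero, ← Finset.univ_sigma_univ, Finset.sum_sigma]
    have h1 : ∀ p : Fin W.bJ, ∑ a : Fin (W.szJ p), Vw W (Sum.inl ⟨p, a⟩) =
        if W.αJ p = 0 ∧ 2 ≤ W.szJ p then 1 else 0 := fun p => sum_ind_zero (W.szJ_pos p) _ _
    rw [Finset.sum_congr rfl fun p _ => h1 p, Finset.card_filter]
  -- counting: q0' + #(nilpotent blocks of size ≥ 2) = q0
  have hcard : W.q0' +
      (Finset.univ.filter fun p : Fin W.bJ => W.αJ p = 0 ∧ 2 ≤ W.szJ p).card = W.q0 := by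
    have h1 : (Finset.univ.filter fun p : Fin W.bJ => W.αJ p = 0 ∧ 2 ≤ W.szJ p)
        = Finset.univ.filter fun p : Fin W.bJ => W.αJ p = 0 ∧ ¬ W.szJ p = 1 := by
      refine Finset.filter_congr fun p _ => ?_
      have := W.szJ_pos p
      constructor
      · rintro ⟨h0, h2⟩; exact ⟨h0, by omega⟩
      · rintro ⟨h0, h2⟩; exact ⟨h0, by omega⟩
    rw [WeierstrassForm.q0', WeierstrassForm.q0, h1, ← Finset.filter_filter,
      ← Finset.filter_filter]
    exact Finset.card_filter_add_card_filter_not (p := fun p => W.szJ p = 1)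
  -- conclude
  have hle : 2 * W.q0 - W.q0' ≤ ∑ i, Uw W (W.e i) + ∑ j, Vw W (W.e j) := by
    rw [hU, hV]; omega
  have key2 : (X : Polynomial ℂ) ^ (2 * W.q0 - W.q0') ∣
      (Pc * quadPencil m c k ε * Qc).det := (pow_dvd_pow X hle).trans key
  have hPu : IsUnit Pc.det := by
    have : Pc.det = Polynomial.C W.P.det := by
      rw [hPc]; exact ((Polynomial.C : ℂ →+* Polynomial ℂ).map_det W.P).symm
    rw [this]; exact W.hP.map (Polynomial.C : ℂ →+* Polynomial ℂ)
  have hQu : IsUnit Qc.det := by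
    have : Qc.det = Polynomial.C W.Q.det := by
      rw [hQc]; exact ((Polynomial.C : ℂ →+* Polynomial ℂ).map_det W.Q).symm
    rw [this]; exact W.hQ.map (Polynomial.C : ℂ →+* Polynomial ℂ)
  rw [Matrix.det_mul, Matrix.det_mul, hQu.dvd_mul_right, hPu.dvd_mul_left] at key2
  exact key2
end
end
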